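/- Under the stated setup, assume that n_1, …, n_ℓ are pairwise coprime and that G has no pseudo-reflection. Then the following are equivalent: (1) tr_{R^G}(R^{det^{-1}}) ⊇ m_G (i.e., R^G is nearly Gorenstein, since R^{det^{-1}} is a graded canonical module of R^G up to degree shift); (2) the ideal R^{det} · R^{det^{-1}} of R^G contains m_G; (3) every monomial of positive degree lying in R^G is divisible in R by some monomial belonging to R^{det}. -/

import Mathlib

open MvPolynomial

set_option synthInstance.maxHeartbeats 1000000
set_option maxHeartbeats 1000000

noncomputable section

/-- The trace ideal of a module `M` over a commutative ring `A`:
the sum of images of all `A`-linear maps `M → A`. -/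
def traceIdeal (A : Type*) [CommRing A] (M : Type*) [AddCommGroup M] [Module A M] :
    Ideal A :=
  ⨆ f : M →ₗ[A] A, LinearMap.range f

variable {K : Type} [Field K] {d : ℕ}

/-- The subgroup of `K`-algebra automorphisms of `K[X_1,…,X_d]` generated
by a family `σ`. -/
def Ggen {ℓ : ℕ} (σ : Fin ℓ → (MvPolynomial (Fin d) K ≃ₐ[K] MvPolynomial (Fin d) K)) :
    Subgroup (MvPolynomial (Fin d) K ≃ₐ[K] MvPolynomial (Fin d) K) :=
  Subgroup.closure (Set.range σ)

/-- The ring of invariants `R^G`, as a subalgebra of `R = K[X_1,…,X_d]`. -/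
def invariants (G : Subgroup (MvPolynomial (Fin d) K ≃ₐ[K] MvPolynomial (Fin d) K)) :
    Subalgebra K (MvPolynomial (Fin d) K) where
  carrier := {a | ∀ g ∈ G, g a = a}
  mul_mem' := fun ha hb g hg => by rw [map_mul, ha g hg, hb g hg]
  one_mem' := fun g hg => map_one _
  add_mem' := fun ha hb g hg => by rw [map_add, ha g hg, hb g hg]
  zero_mem' := fun g hg => map_zero _
  algebraMap_mem' := fun r g hg => AlgEquiv.commutes g r

/-- The semi-invariants `R^𝒳` of weight a character `𝒳 : G → Kˣ`, as an
`R^G`-submodule of `R`. -/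
def semiInvariants (G : Subgroup (MvPolynomial (Fin d) K ≃ₐ[K] MvPolynomial (Fin d) K))
    (χ : G →* Kˣ) : Submodule (invariants G) (MvPolynomial (Fin d) K) where
  carrier := {a | ∀ g : G, (g : MvPolynomial (Fin d) K ≃ₐ[K] MvPolynomial (Fin d) K) a
      = (χ g : K) • a}
  add_mem' := fun ha hb g => by rw [map_add, ha g, hb g, smul_add]
  zero_mem' := fun g => by rw [map_zero, smul_zero]
  smul_mem' := fun s a ha g => by
    have h1 : (s • a : MvPolynomial (Fin d) K) = (s : MvPolynomial (Fin d) K) * a := rfl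
    rw [h1, map_mul, s.2 g g.2, ha g, mul_smul_comm]

/-- An ideal of `R^G` is graded if, together with each element, it contains all of its
homogeneous components (taken in `R = K[X_1,…,X_d]` with the standard grading). -/
def IsGradedIdeal (G : Subgroup (MvPolynomial (Fin d) K ≃ₐ[K] MvPolynomial (Fin d) K))
    (p : Ideal (invariants G)) : Prop :=
  ∀ a : invariants G, a ∈ p → ∀ k : ℕ, ∀ b : invariants G,
    (b : MvPolynomial (Fin d) K) = homogeneousComponent k (a : MvPolynomial (Fin d) K) →
      b ∈ p

/-- The graded maximal ideal `m_G` of `R^G`: the invariants with zero constant term. -/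
def mG (G : Subgroup (MvPolynomial (Fin d) K ≃ₐ[K] MvPolynomial (Fin d) K)) :
    Ideal (invariants G) :=
  RingHom.ker ((constantCoeff : MvPolynomial (Fin d) K →+* K).comp
    (Subalgebra.val (invariants G)).toRingHom)

/-- A (diagonalizable) algebra automorphism of `K[X_1,…,X_d]` is a pseudo-reflection
if it scales each variable and its eigenspace for the eigenvalue `1` on `K^d`
has dimension `d - 1`, i.e. exactly `d - 1` of the scaling factors equal `1`. -/
def IsPseudoReflection (g : MvPolynomial (Fin d) K ≃ₐ[K] MvPolynomial (Fin d) K) : Prop :=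
  ∃ c : Fin d → K, (∀ j, g (X j) = c j • X j) ∧
    Nat.card {j : Fin d // c j = 1} = d - 1

lemma mem_Ggen {ℓ : ℕ} (σ : Fin ℓ → (MvPolynomial (Fin d) K ≃ₐ[K] MvPolynomial (Fin d) K))
    (i : Fin ℓ) : σ i ∈ Ggen σ :=
  Subgroup.subset_closure (Set.mem_range_self i)

/-- The semi-invariants of the character determined on the generators `σ_i` by the
values `c i ∈ K`, as an `R^G`-submodule of `R`. -/
def semiInvariantsOn {ℓ : ℕ}
    (σ : Fin ℓ → (MvPolynomial (Fin d) K ≃ₐ[K] MvPolynomial (Fin d) K))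
    (c : Fin ℓ → K) : Submodule (invariants (Ggen σ)) (MvPolynomial (Fin d) K) where
  carrier := {a | ∀ i, σ i a = c i • a}
  add_mem' := fun ha hb i => by rw [map_add, ha i, hb i, smul_add]
  zero_mem' := fun i => by rw [map_zero, smul_zero]
  smul_mem' := fun s a ha i => by
    have h1 : (s • a : MvPolynomial (Fin d) K) = (s : MvPolynomial (Fin d) K) * a := rfl
    rw [h1, map_mul, s.2 (σ i) (mem_Ggen σ i), ha i, mul_smul_comm]

/-- The ideal `N₁ · N₂` of `R^G` generated by all products of an element of `N₁`
with an element of `N₂`, for `R^G`-submodules `N₁, N₂` of `R`. -/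
def prodIdeal (G : Subgroup (MvPolynomial (Fin d) K ≃ₐ[K] MvPolynomial (Fin d) K))
    (N₁ N₂ : Submodule (invariants G) (MvPolynomial (Fin d) K)) : Ideal (invariants G) :=
  Ideal.span {a : invariants G | ∃ f ∈ N₁, ∃ h ∈ N₂, (a : MvPolynomial (Fin d) K) = f * h}


open Finset

lemma bezout_finset {ι : Type*} [DecidableEq ι] (s : Finset ι) (t : ι → ℕ) :
    ∃ c : ι → ℤ, ∑ k ∈ s, c k * t k = ((s.gcd t : ℕ) : ℤ) := by
  classical
  induction s using Finset.induction_on with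
  | empty => exact ⟨0, by simp⟩
  | @insert a s' ha ih =>
    obtain ⟨c, hc⟩ := ih
    refine ⟨fun k => if k = a then Nat.gcdA (t a) (s'.gcd t) else
      Nat.gcdB (t a) (s'.gcd t) * c k, ?_⟩
    rw [Finset.sum_insert ha, Finset.gcd_insert]
    simp only []
    simp only [if_true]
    have h2 : ∑ k ∈ s', (if k = a then (Nat.gcdA (t a) (s'.gcd t)) else
        Nat.gcdB (t a) (s'.gcd t) * c k) * (t k : ℤ)
        = Nat.gcdB (t a) (s'.gcd t) * ∑ k ∈ s', c k * t k := by
      rw [Finset.mul_sum]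
      refine Finset.sum_congr rfl fun k hk => ?_
      rw [if_neg (by rintro rfl; exact ha hk)]; ring
    rw [h2, hc]
    have h3 : GCDMonoid.gcd (t a) (s'.gcd t) = Nat.gcd (t a) (s'.gcd t) := rfl
    rw [h3, Nat.gcd_eq_gcd_ab]
    push_cast; ring


lemma keyNT {ℓ d : ℕ} (n : Fin ℓ → ℕ) (hn : ∀ i, 0 < n i)
    (t : Fin ℓ → Fin d → ℕ) (j : Fin d)
    (hg : ∀ i, Nat.gcd ((Finset.univ.erase j).gcd (t i)) (n i) = 1)
    (hcop : ∀ i i', i ≠ i' → Nat.Coprime (n i) (n i'))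
    (e : Fin ℓ → ℕ) :
    ∃ a : Fin d → ℕ, a j = 0 ∧ ∀ i, (∑ j', t i j' * a j') ≡ e i [MOD n i] := by
  classical
  haveI : ∀ i, NeZero (n i) := fun i => ⟨(hn i).ne'⟩
  set φ : (Fin d → ℕ) → ∀ i, ZMod (n i) :=
    fun a i => ((∑ j', t i j' * a j' : ℕ) : ZMod (n i)) with hφ
  have hφadd : ∀ a b, φ (a + b) = φ a + φ b := by
    intro a b; funext i
    simp only [hφ, Pi.add_apply]
    rw [← Nat.cast_add, ← Finset.sum_add_distrib]
    congr 1; refine Finset.sum_congr rfl fun k _ => by ring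
  have hφsmul : ∀ (N : ℕ) a, φ (fun k => N * a k) = N • φ a := by
    intro N a; funext i
    simp only [hφ, Pi.smul_apply, nsmul_eq_mul]
    rw [← Nat.cast_mul, Finset.mul_sum]
    congr 1; refine Finset.sum_congr rfl fun k _ => by ring
  set M : AddSubgroup (∀ i, ZMod (n i)) :=
    { carrier := {x | ∃ a : Fin d → ℕ, a j = 0 ∧ φ a = x}
      zero_mem' := ⟨0, rfl, by funext i; simp [hφ]⟩
      add_mem' := by
        rintro x y ⟨a, haj, rfl⟩ ⟨b, hbj, rfl⟩
        exact ⟨a + b, by simp [haj, hbj], hφadd a b⟩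
      neg_mem' := by
        rintro x ⟨a, haj, rfl⟩
        set N := ∏ i, n i with hN
        have hN1 : 1 ≤ N := Finset.one_le_prod' fun i _ => hn i
        have hNx : N • φ a = 0 := by
          funext i
          simp only [Pi.smul_apply, nsmul_eq_mul, Pi.zero_apply]
          have : (N : ZMod (n i)) = 0 := by
            rw [ZMod.natCast_eq_zero_iff]
            exact Finset.dvd_prod_of_mem n (Finset.mem_univ i)
          rw [this, zero_mul]
        refine ⟨fun k => (N - 1) * a k, by simp [haj], ?_⟩
        rw [hφsmul]
        have hsplit : (N - 1) • φ a + φ a = 0 := by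
          rw [← succ_nsmul, Nat.sub_add_cancel hN1, hNx]
        exact eq_neg_of_add_eq_zero_left hsplit } with hM
  -- per-component surjectivity
  have hsurj : ∀ i, Function.Surjective
      ((Pi.evalAddMonoidHom (fun i => ZMod (n i)) i).comp M.subtype) := by
    intro i r
    -- find a : Fin d → ℕ with a j = 0 and (∑ t i j' * a j' : ZMod (n i)) = r
    obtain ⟨c, hc⟩ := bezout_finset (Finset.univ.erase j) (t i)
    set D := (Finset.univ.erase j).gcd (t i) with hD
    -- 1 = D * A + n i * B
    have hbez := Nat.gcd_eq_gcd_ab D (n i)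
    rw [hg i] at hbez
    set A := Nat.gcdA D (n i) with hA
    -- integer combination z
    set z : Fin d → ℤ := fun k => if k = j then 0 else c k * (A * (r.val : ℤ)) with hz
    set a : Fin d → ℕ := fun k => ((z k : ZMod (n i)).val) with ha2
    refine ⟨⟨φ a, a, by simp [ha2, hz], rfl⟩, ?_⟩
    -- compute
    have hcast : ∀ k, ((a k : ℕ) : ZMod (n i)) = ((z k : ℤ) : ZMod (n i)) := by
      intro k; rw [ha2]; simp [ZMod.natCast_val, ZMod.intCast_cast]
    show φ a i = r
    have step : φ a i = ((∑ j', (t i j' : ℤ) * z j' : ℤ) : ZMod (n i)) := by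
      simp only [hφ]
      rw [Nat.cast_sum, Int.cast_sum]
      refine Finset.sum_congr rfl fun k _ => ?_
      rw [Nat.cast_mul, Int.cast_mul, hcast k, Int.cast_natCast]
    rw [step]
    have hsum : (∑ j', (t i j' : ℤ) * z j') = (∑ k ∈ Finset.univ.erase j, c k * (t i k)) * (A * (r.val : ℤ)) := by
      rw [Finset.sum_mul]
      rw [← Finset.sum_subset (Finset.subset_univ (Finset.univ.erase j))]
      · refine Finset.sum_congr rfl fun k hk => ?_
        have : k ≠ j := (Finset.mem_erase.mp hk).1
        simp only [hz, if_neg this]; ring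
      · intro k _ hk
        have : k = j := by
          by_contra hne
          exact hk (Finset.mem_erase.mpr ⟨hne, Finset.mem_univ k⟩)
        simp [hz, this]
    rw [hsum, hc]
    have hres : ((D : ℤ) * (A * (r.val : ℤ)) : ℤ) = (r.val : ℤ) * ((D : ℤ) * A) := by ring
    rw [hres]
    have hDA : (((D : ℤ) * A : ℤ) : ZMod (n i)) = 1 := by
      push_cast at hbez
      have hDA2 : (D : ℤ) * A = 1 - (n i) * Nat.gcdB D (n i) := by linarith
      rw [hDA2, Int.cast_sub, Int.cast_one, Int.cast_mul, Int.cast_natCast,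
        ZMod.natCast_self, zero_mul, sub_zero]
    rw [Int.cast_mul, hDA, mul_one, Int.cast_natCast, ZMod.natCast_val, ZMod.cast_id]
  -- cardinality
  have hcard : ∀ i, n i ∣ Nat.card M := by
    intro i
    have := AddSubgroup.card_dvd_of_surjective _ (hsurj i)
    simpa [Nat.card_zmod] using this
  have hprod : (∏ i, n i) ∣ Nat.card M := by
    classical
    have : ∀ s : Finset (Fin ℓ), (∏ i ∈ s, n i) ∣ Nat.card M := by
      intro s
      induction s using Finset.induction_on with
      | empty => simp
      | @insert i s' hi ih =>
        rw [Finset.prod_insert hi]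
        refine Nat.Coprime.mul_dvd_of_dvd_of_dvd ?_ (hcard i) ih
        exact Nat.Coprime.prod_right fun i' hi' => hcop i i' (by rintro rfl; exact hi hi')
    exact this Finset.univ
  have hMtop : M = ⊤ := by
    have hle : Nat.card M ∣ Nat.card (∀ i, ZMod (n i)) := by
      exact AddSubgroup.card_dvd_of_injective M.subtype M.subtype_injective
    rw [Nat.card_pi] at hle
    simp only [Nat.card_zmod] at hle
    refine AddSubgroup.eq_top_of_card_eq M ?_
    rw [Nat.card_pi]
    simp only [Nat.card_zmod]
    exact Nat.dvd_antisymm hle hprod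
  have : (fun i => ((e i : ℕ) : ZMod (n i))) ∈ M := by rw [hMtop]; trivial
  obtain ⟨a, haj, hae⟩ := this
  refine ⟨a, haj, fun i => ?_⟩
  have := congrFun hae i
  simp only [hφ] at this
  exact (ZMod.natCast_eq_natCast_iff _ _ _).mp this
section AlgLemmas

variable {K : Type} [Field K] {d ℓ : ℕ}
variable (ξ : Fin ℓ → K) (t : Fin ℓ → Fin d → ℕ)
variable (σ : Fin ℓ → (MvPolynomial (Fin d) K ≃ₐ[K] MvPolynomial (Fin d) K))

/-- weight of a monomial exponent under generator `i`. -/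
def wt (i : Fin ℓ) (m : Fin d →₀ ℕ) : ℕ := ∑ j, t i j * m j

lemma sigma_monomial (hσ : ∀ i j, σ i (X j) = ξ i ^ t i j • X j)
    (i : Fin ℓ) (m : Fin d →₀ ℕ) (r : K) :
    σ i (monomial m r) = ξ i ^ wt t i m • monomial m r := by
  have hC : σ i (C r) = C r := by
    rw [← MvPolynomial.algebraMap_eq]; exact AlgEquiv.commutes _ r
  have hprod : (m.prod fun j e => (X j : MvPolynomial (Fin d) K) ^ e)
      = ∏ j, (X j : MvPolynomial (Fin d) K) ^ m j :=
    Finsupp.prod_fintype _ _ (fun j => pow_zero _)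
  have hfac : ∀ j, σ i ((X j : MvPolynomial (Fin d) K) ^ m j)
      = C (ξ i ^ (t i j * m j)) * (X j : MvPolynomial (Fin d) K) ^ m j := by
    intro j
    rw [map_pow, hσ i j, smul_eq_C_mul, mul_pow, ← C_pow, ← pow_mul]
  rw [monomial_eq, map_mul, hC, hprod, map_prod]
  simp only [hfac]
  rw [Finset.prod_mul_distrib, ← map_prod (C : K →+* MvPolynomial (Fin d) K)
      (fun x => ξ i ^ (t i x * m x)) Finset.univ, Finset.prod_pow_eq_pow_sum]
  rw [smul_eq_C_mul, wt]
  ring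

lemma coeff_sigma (hσ : ∀ i j, σ i (X j) = ξ i ^ t i j • X j)
    (i : Fin ℓ) (a : MvPolynomial (Fin d) K) (m : Fin d →₀ ℕ) :
    coeff m (σ i a) = ξ i ^ wt t i m * coeff m a := by
  conv_lhs => rw [a.as_sum]
  rw [map_sum]
  rw [coeff_sum]
  simp only [sigma_monomial ξ t σ hσ i, coeff_smul, coeff_monomial, smul_eq_mul,
    mul_ite, mul_zero]
  rw [Finset.sum_ite_eq' a.support m (fun v => ξ i ^ wt t i v * coeff v a)]
  split_ifs with h
  · rfl
  · rw [MvPolynomial.notMem_support_iff.mp h, mul_zero]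

lemma mem_semiInvariantsOn_iff (hσ : ∀ i j, σ i (X j) = ξ i ^ t i j • X j)
    (c : Fin ℓ → K) (a : MvPolynomial (Fin d) K) :
    a ∈ semiInvariantsOn σ c ↔
      ∀ m : Fin d →₀ ℕ, coeff m a ≠ 0 → ∀ i, ξ i ^ wt t i m = c i := by
  constructor
  · intro h m hm i
    have := congrArg (coeff m) (h i)
    rw [coeff_sigma ξ t σ hσ, coeff_smul, smul_eq_mul] at this
    exact mul_right_cancel₀ hm this
  · intro h i
    show σ i a = c i • a
    apply MvPolynomial.ext
    intro m
    rw [coeff_sigma ξ t σ hσ, coeff_smul, smul_eq_mul]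
    by_cases hm : coeff m a = 0
    · rw [hm, mul_zero, mul_zero]
    · rw [h m hm i]

lemma fixed_of_gen_fixed (a : MvPolynomial (Fin d) K) (h : ∀ i, σ i a = a) :
    a ∈ invariants (Ggen σ) := by
  intro g hg
  let S : Subgroup (MvPolynomial (Fin d) K ≃ₐ[K] MvPolynomial (Fin d) K) :=
    { carrier := {g | g a = a}
      one_mem' := AlgEquiv.one_apply a
      mul_mem' := by
        intro x y hx hy
        show (x * y) a = a
        rw [AlgEquiv.mul_apply, hy, hx]
      inv_mem' := by
        intro x hx
        show x⁻¹ a = a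
        have : x⁻¹ (x a) = a := by
          show (x⁻¹ * x) a = a
          rw [inv_mul_cancel]
          exact AlgEquiv.one_apply a
        rwa [hx] at this }
  have hle : Ggen σ ≤ S := by
    rw [Ggen, Subgroup.closure_le]
    rintro g' ⟨i, rfl⟩
    exact h i
  exact hle hg

lemma mem_invariants_iff (hσ : ∀ i j, σ i (X j) = ξ i ^ t i j • X j)
    (a : MvPolynomial (Fin d) K) :
    a ∈ invariants (Ggen σ) ↔
      ∀ m : Fin d →₀ ℕ, coeff m a ≠ 0 → ∀ i, ξ i ^ wt t i m = 1 := by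
  constructor
  · intro h m hm i
    have := congrArg (coeff m) (h (σ i) (mem_Ggen σ i))
    rw [coeff_sigma ξ t σ hσ] at this
    have h2 : ξ i ^ wt t i m * coeff m a = 1 * coeff m a := by rw [this, one_mul]
    exact mul_right_cancel₀ hm h2
  · intro h
    apply fixed_of_gen_fixed
    intro i
    apply MvPolynomial.ext
    intro m
    rw [coeff_sigma ξ t σ hσ]
    by_cases hm : coeff m a = 0
    · rw [hm, mul_zero]
    · rw [h m hm i, one_mul]

end AlgLemmas
section AlgLemmas2

variable {K : Type} [Field K] {d ℓ : ℕ}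
variable (ξ : Fin ℓ → K) (t : Fin ℓ → Fin d → ℕ)
variable (σ : Fin ℓ → (MvPolynomial (Fin d) K ≃ₐ[K] MvPolynomial (Fin d) K))

lemma semiInv_mul {c c' : Fin ℓ → K} {a b : MvPolynomial (Fin d) K}
    (ha : a ∈ semiInvariantsOn σ c) (hb : b ∈ semiInvariantsOn σ c') :
    a * b ∈ semiInvariantsOn σ (fun i => c i * c' i) := by
  intro i
  rw [map_mul, ha i, hb i, smul_mul_smul_comm]

lemma inv_of_semiInv_one {c : Fin ℓ → K} {a : MvPolynomial (Fin d) K}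
    (ha : a ∈ semiInvariantsOn σ c) (hc : ∀ i, c i = 1) :
    a ∈ invariants (Ggen σ) := by
  apply fixed_of_gen_fixed
  intro i
  rw [ha i, hc i, one_smul]

lemma prim_pow_mod {x : K} {nn : ℕ} (h : IsPrimitiveRoot x nn) {A B : ℕ}
    (hAB : A ≡ B [MOD nn]) : x ^ A = x ^ B := by
  have key : ∀ k : ℕ, x ^ k = x ^ (k % nn) := by
    intro k
    conv_lhs => rw [← Nat.mod_add_div k nn]
    rw [pow_add, pow_mul, h.pow_eq_one, one_pow, mul_one]
  rw [key A, key B, hAB]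

lemma sigma_pow (hσ : ∀ i j, σ i (X j) = ξ i ^ t i j • X j)
    (i : Fin ℓ) (k : ℕ) (j : Fin d) :
    ((σ i ^ k : MvPolynomial (Fin d) K ≃ₐ[K] MvPolynomial (Fin d) K)) (X j)
      = (ξ i ^ (t i j * k)) • X j := by
  induction k with
  | zero => simp [AlgEquiv.one_apply]
  | succ k ih =>
    rw [pow_succ, AlgEquiv.mul_apply, hσ i j, map_smul, ih, smul_smul,
      ← pow_add]
    congr 2
    ring

end AlgLemmas2
section AlgLemmas3

variable {K : Type} [Field K] {d ℓ : ℕ}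
variable (n : Fin ℓ → ℕ) (ξ : Fin ℓ → K) (t : Fin ℓ → Fin d → ℕ)
variable (σ : Fin ℓ → (MvPolynomial (Fin d) K ≃ₐ[K] MvPolynomial (Fin d) K))

lemma erase_gcd_coprime
    (hn : ∀ i, 0 < n i) (hξ : ∀ i, IsPrimitiveRoot (ξ i) (n i))
    (hgcd : ∀ i, Nat.gcd (Finset.univ.gcd (t i)) (n i) = 1)
    (hσ : ∀ i j, σ i (X j) = ξ i ^ t i j • X j)
    (hpr : ∀ g ∈ Ggen σ, ¬ IsPseudoReflection g)
    (i : Fin ℓ) (j : Fin d) :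
    Nat.gcd ((Finset.univ.erase j).gcd (t i)) (n i) = 1 := by
  classical
  set D := Nat.gcd ((Finset.univ.erase j).gcd (t i)) (n i) with hD
  have hDn : D ∣ n i := Nat.gcd_dvd_right _ _
  by_contra hD1
  have hD0 : D ≠ 0 := by
    intro h0
    have := Nat.eq_zero_of_gcd_eq_zero_right h0
    exact (hn i).ne' this
  set k := n i / D with hk
  have hkD : D * k = n i := Nat.mul_div_cancel' hDn
  have hk0 : k ≠ 0 := by
    intro h0
    rw [h0, mul_zero] at hkD
    exact (hn i).ne' hkD.symm
  set g := σ i ^ k with hg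
  have hgG : g ∈ Ggen σ := pow_mem (mem_Ggen σ i) k
  set c : Fin d → K := fun j' => ξ i ^ (t i j' * k) with hc
  have hgX : ∀ j', g (X j') = c j' • X j' := fun j' => sigma_pow ξ t σ hσ i k j'
  have hc1 : ∀ j', j' ≠ j → c j' = 1 := by
    intro j' hj'
    have hdvd : D ∣ t i j' := by
      refine dvd_trans (Nat.gcd_dvd_left _ _) ?_
      exact Finset.gcd_dvd (Finset.mem_erase.mpr ⟨hj', Finset.mem_univ j'⟩)
    obtain ⟨q, hq⟩ := hdvd
    have : t i j' * k = q * n i := by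
      rw [hq, ← hkD]; ring
    rw [hc]
    simp only []
    rw [this, pow_mul', (hξ i).pow_eq_one, one_pow]
  by_cases hcj : c j = 1
  · -- then D divides all t i j'', contradiction with hgcd
    have hdvdj : D ∣ t i j := by
      have h1 : ξ i ^ (t i j * k) = 1 := hcj
      have h2 : n i ∣ t i j * k := ((hξ i).pow_eq_one_iff_dvd _).mp h1
      rw [← hkD] at h2
      have h3 : D * k ∣ (t i j) * k := h2
      exact (mul_dvd_mul_iff_right hk0).mp h3
    have hdall : D ∣ Finset.univ.gcd (t i) := by
      refine Finset.dvd_gcd fun j'' _ => ?_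
      by_cases hj'' : j'' = j
      · rw [hj'']; exact hdvdj
      · refine dvd_trans (Nat.gcd_dvd_left _ _) ?_
        exact Finset.gcd_dvd (Finset.mem_erase.mpr ⟨hj'', Finset.mem_univ j''⟩)
    have : D ∣ Nat.gcd (Finset.univ.gcd (t i)) (n i) := Nat.dvd_gcd hdall hDn
    rw [hgcd i] at this
    exact hD1 (Nat.dvd_one.mp this)
  · -- pseudo-reflection
    refine hpr g hgG ⟨c, hgX, ?_⟩
    have hiff : ∀ j', c j' = 1 ↔ ¬ (j' = j) := by
      intro j'
      constructor
      · intro h1 h2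
        rw [h2] at h1
        exact hcj h1
      · exact hc1 j'
    rw [Nat.card_eq_fintype_card]
    rw [Fintype.card_congr (Equiv.subtypeEquivRight hiff)]
    rw [Fintype.card_subtype_compl]
    rw [Fintype.card_subtype_eq]
    simp

end AlgLemmas3
section AlgLemmas4

variable {K : Type} [Field K] {d ℓ : ℕ}
variable (n : Fin ℓ → ℕ) (ξ : Fin ℓ → K) (t : Fin ℓ → Fin d → ℕ)
variable (σ : Fin ℓ → (MvPolynomial (Fin d) K ≃ₐ[K] MvPolynomial (Fin d) K))

lemma exists_monomial_wt
    (hn : ∀ i, 0 < n i) (hξ : ∀ i, IsPrimitiveRoot (ξ i) (n i))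
    (hgcd : ∀ i, Nat.gcd (Finset.univ.gcd (t i)) (n i) = 1)
    (hσ : ∀ i j, σ i (X j) = ξ i ^ t i j • X j)
    (hcop : ∀ i i', i ≠ i' → Nat.Coprime (n i) (n i'))
    (hpr : ∀ g ∈ Ggen σ, ¬ IsPseudoReflection g)
    (e : Fin ℓ → ℕ) (j : Fin d) :
    ∃ a : Fin d →₀ ℕ, a j = 0 ∧ ∀ i, ξ i ^ wt t i a = ξ i ^ e i := by
  obtain ⟨a, haj, ha⟩ := keyNT n hn t j
    (fun i => erase_gcd_coprime n ξ t σ hn hξ hgcd hσ hpr i j) hcop e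
  refine ⟨Finsupp.equivFunOnFinite.symm a, by simp [haj], fun i => ?_⟩
  have hwt : wt t i (Finsupp.equivFunOnFinite.symm a) = ∑ j', t i j' * a j' := by
    rw [wt]
    refine Finset.sum_congr rfl fun j' _ => by simp
  rw [hwt]
  exact prim_pow_mod (hξ i) (ha i)

lemma monomial_mem_semiInv_iff
    (hσ : ∀ i j, σ i (X j) = ξ i ^ t i j • X j)
    (c : Fin ℓ → K) (m : Fin d →₀ ℕ) :
    monomial m (1 : K) ∈ semiInvariantsOn σ c ↔ ∀ i, ξ i ^ wt t i m = c i := by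
  rw [mem_semiInvariantsOn_iff ξ t σ hσ]
  constructor
  · intro h i
    refine h m ?_ i
    rw [coeff_monomial, if_pos rfl]
    exact one_ne_zero
  · intro h m' hm' i
    rw [coeff_monomial] at hm'
    by_cases hmm : m = m'
    · rw [← hmm]; exact h i
    · rw [if_neg hmm] at hm'; exact absurd rfl hm'

lemma xi_ne_zero (hn : ∀ i, 0 < n i) (hξ : ∀ i, IsPrimitiveRoot (ξ i) (n i))
    (i : Fin ℓ) : ξ i ≠ 0 := by
  intro h0
  have := (hξ i).pow_eq_one
  rw [h0, zero_pow (hn i).ne'] at this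
  exact zero_ne_one this

/-- a monomial in `R^{det⁻¹}` avoiding the variable `j`. -/
lemma exists_monomial_detInv
    (hn : ∀ i, 0 < n i) (hξ : ∀ i, IsPrimitiveRoot (ξ i) (n i))
    (hgcd : ∀ i, Nat.gcd (Finset.univ.gcd (t i)) (n i) = 1)
    (hσ : ∀ i j, σ i (X j) = ξ i ^ t i j • X j)
    (hcop : ∀ i i', i ≠ i' → Nat.Coprime (n i) (n i'))
    (hpr : ∀ g ∈ Ggen σ, ¬ IsPseudoReflection g)
    (j : Fin d) :
    ∃ a : Fin d →₀ ℕ, a j = 0 ∧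
      monomial a (1 : K) ∈ semiInvariantsOn σ (fun i => (ξ i ^ (∑ j', t i j'))⁻¹) := by
  obtain ⟨a, haj, ha⟩ := exists_monomial_wt n ξ t σ hn hξ hgcd hσ hcop hpr
    (fun i => (∑ j', t i j') * (n i - 1)) j
  refine ⟨a, haj, ?_⟩
  rw [monomial_mem_semiInv_iff ξ t σ hσ]
  intro i
  rw [ha i]
  refine eq_inv_of_mul_eq_one_left ?_
  rw [← pow_add]
  have hexp : (∑ j', t i j') * (n i - 1) + (∑ j', t i j') = (∑ j', t i j') * n i := by
    have h1 : n i - 1 + 1 = n i := Nat.sub_add_cancel (hn i)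
    calc (∑ j', t i j') * (n i - 1) + (∑ j', t i j')
        = (∑ j', t i j') * (n i - 1 + 1) := by ring
      _ = (∑ j', t i j') * n i := by rw [h1]
  rw [hexp, pow_mul', (hξ i).pow_eq_one, one_pow]

/-- the all-ones monomial lies in `R^{det}`. -/
lemma ones_monomial_det (hσ : ∀ i j, σ i (X j) = ξ i ^ t i j • X j) :
    monomial (Finsupp.equivFunOnFinite.symm (fun _ => 1)) (1 : K)
      ∈ semiInvariantsOn σ (fun i => ξ i ^ (∑ j', t i j')) := by
  rw [monomial_mem_semiInv_iff ξ t σ hσ]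
  intro i
  congr 1
  rw [wt]
  refine Finset.sum_congr rfl fun j' _ => by simp

end AlgLemmas4
section AlgLemmas5

variable {K : Type} [Field K] {d ℓ : ℕ}
variable (n : Fin ℓ → ℕ) (ξ : Fin ℓ → K) (t : Fin ℓ → Fin d → ℕ)
variable (σ : Fin ℓ → (MvPolynomial (Fin d) K ≃ₐ[K] MvPolynomial (Fin d) K))

lemma wt_sub (i : Fin ℓ) {v m : Fin d →₀ ℕ} (h : v ≤ m) :
    wt t i (m - v) + wt t i v = wt t i m := by
  rw [wt, wt, wt, ← Finset.sum_add_distrib]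
  refine Finset.sum_congr rfl fun j _ => ?_
  rw [Finsupp.tsub_apply, ← Nat.mul_add, Nat.sub_add_cancel (Finsupp.le_def.mp h j)]

lemma C_mem_invariants (r : K) : C r ∈ invariants (Ggen σ) := by
  have := (invariants (Ggen σ)).algebraMap_mem r
  rwa [MvPolynomial.algebraMap_eq] at this

lemma mul_PN_invariant
    (hn : ∀ i, 0 < n i) (hξ : ∀ i, IsPrimitiveRoot (ξ i) (n i))
    {p q : MvPolynomial (Fin d) K}
    (hp : p ∈ semiInvariantsOn σ (fun i => ξ i ^ (∑ j', t i j')))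
    (hq : q ∈ semiInvariantsOn σ (fun i => (ξ i ^ (∑ j', t i j'))⁻¹)) :
    p * q ∈ invariants (Ggen σ) := by
  refine inv_of_semiInv_one σ (semiInv_mul σ hp hq) fun i => ?_
  exact mul_inv_cancel₀ (pow_ne_zero _ (xi_ne_zero n ξ hn hξ i))

lemma key_le
    (hn : ∀ i, 0 < n i) (hξ : ∀ i, IsPrimitiveRoot (ξ i) (n i))
    (hgcd : ∀ i, Nat.gcd (Finset.univ.gcd (t i)) (n i) = 1)
    (hσ : ∀ i j, σ i (X j) = ξ i ^ t i j • X j)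
    (hcop : ∀ i i', i ≠ i' → Nat.Coprime (n i) (n i'))
    (hpr : ∀ g ∈ Ggen σ, ¬ IsPseudoReflection g)
    (f : (semiInvariantsOn σ (fun i => (ξ i ^ (∑ j', t i j'))⁻¹)) →ₗ[invariants (Ggen σ)]
        (invariants (Ggen σ)))
    (a m : Fin d →₀ ℕ)
    (ha : monomial a (1 : K) ∈ semiInvariantsOn σ (fun i => (ξ i ^ (∑ j', t i j'))⁻¹))
    (hc : coeff m ((f ⟨monomial a 1, ha⟩ : invariants (Ggen σ)) : MvPolynomial (Fin d) K) ≠ 0) :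
    a ≤ m := by
  classical
  rw [Finsupp.le_def]
  intro j
  obtain ⟨a', ha'j, ha'⟩ := exists_monomial_detInv n ξ t σ hn hξ hgcd hσ hcop hpr j
  set b : Fin d →₀ ℕ := Finsupp.equivFunOnFinite.symm (fun _ => 1) with hbdef
  have hb := ones_monomial_det ξ t σ hσ
  have hbj : b j = 1 := by simp [hbdef]
  have humem : (monomial a' (1:K)) * monomial b 1 ∈ invariants (Ggen σ) := by
    rw [mul_comm]; exact mul_PN_invariant n ξ t σ hn hξ hb ha'
  have hvmem : (monomial a (1:K)) * monomial b 1 ∈ invariants (Ggen σ) := by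
    rw [mul_comm]; exact mul_PN_invariant n ξ t σ hn hξ hb ha
  set u : invariants (Ggen σ) := ⟨_, humem⟩ with hu
  set v : invariants (Ggen σ) := ⟨_, hvmem⟩ with hv
  set x : (semiInvariantsOn σ (fun i => (ξ i ^ (∑ j', t i j'))⁻¹)) := ⟨monomial a 1, ha⟩
  set x' : (semiInvariantsOn σ (fun i => (ξ i ^ (∑ j', t i j'))⁻¹)) := ⟨monomial a' 1, ha'⟩
  have hsmul : u • x = v • x' := by
    apply Subtype.ext
    show (monomial a' (1:K) * monomial b 1) * monomial a 1
        = (monomial a (1:K) * monomial b 1) * monomial a' 1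
    ring
  have hfs := congrArg f hsmul
  rw [map_smul, map_smul] at hfs
  have hR : (monomial a' (1:K) * monomial b 1) * ((f x : invariants (Ggen σ)) : MvPolynomial (Fin d) K)
      = (monomial a (1:K) * monomial b 1) * ((f x' : invariants (Ggen σ)) : MvPolynomial (Fin d) K) := by
    have := congrArg (fun z : invariants (Ggen σ) => (z : MvPolynomial (Fin d) K)) hfs
    simpa [hu, hv, Submodule.coe_smul, smul_eq_mul] using this
  rw [monomial_mul, one_mul, monomial_mul, one_mul] at hR
  have hcoeff : coeff ((a' + b) + m) (monomial (a' + b) (1:K)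
      * ((f x : invariants (Ggen σ)) : MvPolynomial (Fin d) K)) ≠ 0 := by
    rw [coeff_monomial_mul, one_mul]
    exact hc
  rw [hR] at hcoeff
  have hsupp := MvPolynomial.support_mul _ _ (MvPolynomial.mem_support_iff.mpr hcoeff)
  rw [support_monomial, if_neg (one_ne_zero)] at hsupp
  obtain ⟨y, hy, z, hz, hyz⟩ := Finset.mem_add.mp hsupp
  rw [Finset.mem_singleton] at hy
  subst hy
  have happ := congrArg (fun w : Fin d →₀ ℕ => w j) hyz
  simp only [Finsupp.add_apply] at happ
  rw [ha'j, hbj] at happ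
  omega

end AlgLemmas5
section AlgLemmas6

variable {K : Type} [Field K] {d ℓ : ℕ}
variable (n : Fin ℓ → ℕ) (ξ : Fin ℓ → K) (t : Fin ℓ → Fin d → ℕ)
variable (σ : Fin ℓ → (MvPolynomial (Fin d) K ≃ₐ[K] MvPolynomial (Fin d) K))

/-- The ideal of invariants all of whose monomials are divisible by a `det`-monomial. -/
def divIdl : Ideal (invariants (Ggen σ)) where
  carrier := {p | ∀ m : Fin d →₀ ℕ, coeff m (p : MvPolynomial (Fin d) K) ≠ 0 →
    ∃ m' : Fin d →₀ ℕ,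
      monomial m' (1 : K) ∈ semiInvariantsOn σ (fun i => ξ i ^ (∑ j', t i j')) ∧ m' ≤ m}
  add_mem' := by
    intro p q hp hq m hm
    have : coeff m (p : MvPolynomial (Fin d) K) ≠ 0 ∨
        coeff m (q : MvPolynomial (Fin d) K) ≠ 0 := by
      by_contra hcon
      push_neg at hcon
      have : coeff m ((p + q : invariants (Ggen σ)) : MvPolynomial (Fin d) K) = 0 := by
        rw [AddMemClass.coe_add, coeff_add, hcon.1, hcon.2, add_zero]
      exact hm this
    rcases this with h | h
    · exact hp m h
    · exact hq m h
  zero_mem' := by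
    intro m hm
    simp at hm
  smul_mem' := by
    intro r p hp m hm
    classical
    have hm2 : coeff m ((r : MvPolynomial (Fin d) K) * (p : MvPolynomial (Fin d) K)) ≠ 0 := hm
    have hsupp := MvPolynomial.support_mul _ _ (MvPolynomial.mem_support_iff.mpr hm2)
    obtain ⟨y, hy, z, hz, hyz⟩ := Finset.mem_add.mp hsupp
    obtain ⟨m', hm'P, hm'le⟩ := hp z (MvPolynomial.mem_support_iff.mp hz)
    refine ⟨m', hm'P, hm'le.trans ?_⟩
    rw [← hyz]
    exact le_add_self

lemma range_le_divIdl
    (hn : ∀ i, 0 < n i) (hξ : ∀ i, IsPrimitiveRoot (ξ i) (n i))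
    (hgcd : ∀ i, Nat.gcd (Finset.univ.gcd (t i)) (n i) = 1)
    (hσ : ∀ i j, σ i (X j) = ξ i ^ t i j • X j)
    (hcop : ∀ i i', i ≠ i' → Nat.Coprime (n i) (n i'))
    (hpr : ∀ g ∈ Ggen σ, ¬ IsPseudoReflection g)
    (f : (semiInvariantsOn σ (fun i => (ξ i ^ (∑ j', t i j'))⁻¹)) →ₗ[invariants (Ggen σ)]
        (invariants (Ggen σ))) :
    LinearMap.range f ≤ divIdl ξ t σ := by
  classical
  rintro p ⟨x, rfl⟩
  intro m hm
  set s := (x : MvPolynomial (Fin d) K).support with hs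
  have hmonN : ∀ v ∈ s, monomial v (1 : K) ∈
      semiInvariantsOn σ (fun i => (ξ i ^ (∑ j', t i j'))⁻¹) := by
    intro v hv
    rw [monomial_mem_semiInv_iff ξ t σ hσ]
    exact fun i => (mem_semiInvariantsOn_iff ξ t σ hσ _ _).mp x.2 v
      (MvPolynomial.mem_support_iff.mp hv) i
  have hxsum : x = ∑ v ∈ s.attach,
      (⟨C (coeff (v : Fin d →₀ ℕ) (x : MvPolynomial (Fin d) K)), C_mem_invariants σ _⟩ :
        invariants (Ggen σ)) • (⟨monomial (v : Fin d →₀ ℕ) 1, hmonN v v.2⟩ :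
        semiInvariantsOn σ (fun i => (ξ i ^ (∑ j', t i j'))⁻¹)) := by
    apply Subtype.ext
    rw [AddSubmonoidClass.coe_finset_sum]
    trans (∑ v ∈ s.attach, monomial (v : Fin d →₀ ℕ)
        (coeff (v : Fin d →₀ ℕ) (x : MvPolynomial (Fin d) K)))
    · rw [Finset.sum_attach s (fun v => monomial v (coeff v (x : MvPolynomial (Fin d) K)))]
      exact (x : MvPolynomial (Fin d) K).as_sum
    · refine Finset.sum_congr rfl fun v _ => ?_
      show monomial (v : Fin d →₀ ℕ) (coeff (v : Fin d →₀ ℕ) (x : MvPolynomial (Fin d) K))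
          = C (coeff (v : Fin d →₀ ℕ) (x : MvPolynomial (Fin d) K)) * monomial (v : Fin d →₀ ℕ) 1
      rw [C_mul_monomial, mul_one]
  have hfx : f x = ∑ v ∈ s.attach,
      (⟨C (coeff (v : Fin d →₀ ℕ) (x : MvPolynomial (Fin d) K)), C_mem_invariants σ _⟩ :
        invariants (Ggen σ)) • f (⟨monomial (v : Fin d →₀ ℕ) 1, hmonN v v.2⟩) := by
    conv_lhs => rw [hxsum]
    rw [map_sum]
    exact Finset.sum_congr rfl fun v _ => by rw [map_smul]
  have hcoe : ((f x : invariants (Ggen σ)) : MvPolynomial (Fin d) K)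
      = ∑ v ∈ s.attach, C (coeff (v : Fin d →₀ ℕ) (x : MvPolynomial (Fin d) K)) *
        ((f ⟨monomial (v : Fin d →₀ ℕ) 1, hmonN v v.2⟩ : invariants (Ggen σ)) :
          MvPolynomial (Fin d) K) := by
    rw [hfx, AddSubmonoidClass.coe_finset_sum]
    exact Finset.sum_congr rfl fun v _ => rfl
  rw [hcoe] at hm
  rw [coeff_sum] at hm
  obtain ⟨v, _, hv⟩ := Finset.exists_ne_zero_of_sum_ne_zero hm
  rw [coeff_C_mul] at hv
  have hfv : coeff m ((f ⟨monomial (v : Fin d →₀ ℕ) 1, hmonN v v.2⟩ :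
      invariants (Ggen σ)) : MvPolynomial (Fin d) K) ≠ 0 := right_ne_zero_of_mul hv
  have hle : (v : Fin d →₀ ℕ) ≤ m :=
    key_le n ξ t σ hn hξ hgcd hσ hcop hpr f _ m (hmonN v v.2) hfv
  refine ⟨m - v, ?_, tsub_le_self⟩
  rw [monomial_mem_semiInv_iff ξ t σ hσ]
  intro i
  -- weights
  have hwv : ξ i ^ wt t i (v : Fin d →₀ ℕ) = (ξ i ^ (∑ j', t i j'))⁻¹ :=
    (mem_semiInvariantsOn_iff ξ t σ hσ _ _).mp x.2 _ (MvPolynomial.mem_support_iff.mp v.2) i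
  have hwm : ξ i ^ wt t i m = 1 :=
    (mem_invariants_iff ξ t σ hσ _).mp
      (f ⟨monomial (v : Fin d →₀ ℕ) 1, hmonN v v.2⟩).2 m hfv i
  have harith := wt_sub t i hle
  have : ξ i ^ wt t i (m - (v : Fin d →₀ ℕ)) * ξ i ^ wt t i (v : Fin d →₀ ℕ) = 1 := by
    rw [← pow_add, harith, hwm]
  rw [hwv] at this
  rw [mul_inv_eq_one₀ (pow_ne_zero (∑ j', t i j') (xi_ne_zero n ξ hn hξ i))] at this
  exact this

end AlgLemmas6
section AlgLemmas7

variable {K : Type} [Field K] {d ℓ : ℕ}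
variable (n : Fin ℓ → ℕ) (ξ : Fin ℓ → K) (t : Fin ℓ → Fin d → ℕ)
variable (σ : Fin ℓ → (MvPolynomial (Fin d) K ≃ₐ[K] MvPolynomial (Fin d) K))

lemma monomial_mem_inv_iff (hσ : ∀ i j, σ i (X j) = ξ i ^ t i j • X j) (m : Fin d →₀ ℕ) :
    monomial m (1 : K) ∈ invariants (Ggen σ) ↔ ∀ i, ξ i ^ wt t i m = 1 := by
  rw [mem_invariants_iff ξ t σ hσ]
  constructor
  · intro h i
    refine h m ?_ i
    rw [coeff_monomial, if_pos rfl]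
    exact one_ne_zero
  · intro h m' hm' i
    rw [coeff_monomial] at hm'
    by_cases hmm : m = m'
    · rw [← hmm]; exact h i
    · rw [if_neg hmm] at hm'; exact absurd rfl hm'

lemma prodIdeal_le_divIdl (hσ : ∀ i j, σ i (X j) = ξ i ^ t i j • X j) :
    prodIdeal (Ggen σ) (semiInvariantsOn σ fun i => ξ i ^ (∑ j', t i j'))
      (semiInvariantsOn σ fun i => (ξ i ^ (∑ j', t i j'))⁻¹) ≤ divIdl ξ t σ := by
  classical
  rw [prodIdeal, Ideal.span_le]
  rintro p ⟨q, hq, h, hh, heq⟩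
  intro m hm
  rw [heq] at hm
  have hsupp := MvPolynomial.support_mul _ _ (MvPolynomial.mem_support_iff.mpr hm)
  obtain ⟨y, hy, z, hz, hyz⟩ := Finset.mem_add.mp hsupp
  refine ⟨y, ?_, ?_⟩
  · rw [monomial_mem_semiInv_iff ξ t σ hσ]
    exact fun i => (mem_semiInvariantsOn_iff ξ t σ hσ _ _).mp hq y
      (MvPolynomial.mem_support_iff.mp hy) i
  · rw [← hyz]; exact le_add_self.trans_eq (add_comm z y)

lemma divIdl_monomial (hσ : ∀ i j, σ i (X j) = ξ i ^ t i j • X j)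
    (m : Fin d →₀ ℕ) (hmem : monomial m (1 : K) ∈ invariants (Ggen σ))
    (hdiv : (⟨monomial m 1, hmem⟩ : invariants (Ggen σ)) ∈ divIdl ξ t σ) :
    ∃ m' : Fin d →₀ ℕ,
      (monomial m' (1 : K)) ∈ semiInvariantsOn σ (fun i => ξ i ^ (∑ j', t i j')) ∧
      (monomial m' (1 : K) : MvPolynomial (Fin d) K) ∣ monomial m 1 := by
  obtain ⟨m', hm'P, hm'le⟩ := hdiv m (by rw [coeff_monomial, if_pos rfl]; exact one_ne_zero)
  exact ⟨m', hm'P, monomial_dvd_monomial.mpr ⟨Or.inr hm'le, dvd_refl 1⟩⟩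

lemma mG_monomial_mem (m : Fin d →₀ ℕ) (hm : m ≠ 0)
    (hmem : monomial m (1 : K) ∈ invariants (Ggen σ)) :
    (⟨monomial m 1, hmem⟩ : invariants (Ggen σ)) ∈ mG (Ggen σ) := by
  rw [mG, RingHom.mem_ker]
  show constantCoeff (monomial m (1 : K)) = 0
  rw [constantCoeff_monomial, if_neg hm]

lemma C3_imp_prod
    (hn : ∀ i, 0 < n i) (hξ : ∀ i, IsPrimitiveRoot (ξ i) (n i))
    (hσ : ∀ i j, σ i (X j) = ξ i ^ t i j • X j)
    (hC3 : ∀ m : Fin d →₀ ℕ, m ≠ 0 →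
        (monomial m (1 : K)) ∈ invariants (Ggen σ) →
        ∃ m' : Fin d →₀ ℕ,
          (monomial m' (1 : K)) ∈ semiInvariantsOn σ (fun i => ξ i ^ (∑ j', t i j')) ∧
          (monomial m' (1 : K) : MvPolynomial (Fin d) K) ∣ monomial m 1) :
    mG (Ggen σ) ≤ prodIdeal (Ggen σ) (semiInvariantsOn σ fun i => ξ i ^ (∑ j', t i j'))
      (semiInvariantsOn σ fun i => (ξ i ^ (∑ j', t i j'))⁻¹) := by
  classical
  intro p hp
  have hconst : constantCoeff (p : MvPolynomial (Fin d) K) = 0 := by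
    rw [mG, RingHom.mem_ker] at hp
    exact hp
  set s := (p : MvPolynomial (Fin d) K).support with hs
  have hmonI : ∀ v ∈ s, monomial v (1 : K) ∈ invariants (Ggen σ) := by
    intro v hv
    rw [monomial_mem_inv_iff ξ t σ hσ]
    exact fun i => (mem_invariants_iff ξ t σ hσ _).mp p.2 v
      (MvPolynomial.mem_support_iff.mp hv) i
  have hpsum : p = ∑ v ∈ s.attach,
      (⟨C (coeff (v : Fin d →₀ ℕ) (p : MvPolynomial (Fin d) K)), C_mem_invariants σ _⟩ :
        invariants (Ggen σ)) * (⟨monomial (v : Fin d →₀ ℕ) 1, hmonI v v.2⟩ :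
        invariants (Ggen σ)) := by
    apply Subtype.ext
    rw [AddSubmonoidClass.coe_finset_sum]
    trans (∑ v ∈ s.attach, monomial (v : Fin d →₀ ℕ)
        (coeff (v : Fin d →₀ ℕ) (p : MvPolynomial (Fin d) K)))
    · rw [Finset.sum_attach s (fun v => monomial v (coeff v (p : MvPolynomial (Fin d) K)))]
      exact (p : MvPolynomial (Fin d) K).as_sum
    · refine Finset.sum_congr rfl fun v _ => ?_
      show monomial (v : Fin d →₀ ℕ) (coeff (v : Fin d →₀ ℕ) (p : MvPolynomial (Fin d) K))
          = C (coeff (v : Fin d →₀ ℕ) (p : MvPolynomial (Fin d) K))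
            * monomial (v : Fin d →₀ ℕ) 1
      rw [C_mul_monomial, mul_one]
  rw [hpsum]
  refine Ideal.sum_mem _ fun v _ => Ideal.mul_mem_left _ _ ?_
  -- each invariant monomial of p is in the product ideal
  have hv0 : (v : Fin d →₀ ℕ) ≠ 0 := by
    intro h0
    have := MvPolynomial.mem_support_iff.mp v.2
    rw [h0] at this
    exact this hconst
  obtain ⟨m', hm'P, hdvd⟩ := hC3 (v : Fin d →₀ ℕ) hv0 (hmonI v v.2)
  have hm'le : m' ≤ (v : Fin d →₀ ℕ) := by
    rcases (monomial_dvd_monomial.mp hdvd).1 with h | h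
    · exact absurd h one_ne_zero
    · exact h
  have hNmem : monomial ((v : Fin d →₀ ℕ) - m') (1 : K)
      ∈ semiInvariantsOn σ (fun i => (ξ i ^ (∑ j', t i j'))⁻¹) := by
    rw [monomial_mem_semiInv_iff ξ t σ hσ]
    intro i
    have hwv : ξ i ^ wt t i (v : Fin d →₀ ℕ) = 1 :=
      (monomial_mem_inv_iff ξ t σ hσ _).mp (hmonI v v.2) i
    have hwm' : ξ i ^ wt t i m' = ξ i ^ (∑ j', t i j') :=
      (monomial_mem_semiInv_iff ξ t σ hσ _ _).mp hm'P i
    have harith := wt_sub t i hm'le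
    have hmul : ξ i ^ wt t i ((v : Fin d →₀ ℕ) - m') * ξ i ^ wt t i m' = 1 := by
      rw [← pow_add, harith, hwv]
    rw [hwm'] at hmul
    exact eq_inv_of_mul_eq_one_left hmul
  refine Ideal.subset_span ?_
  refine ⟨monomial m' 1, hm'P, monomial ((v : Fin d →₀ ℕ) - m') 1, hNmem, ?_⟩
  show monomial (v : Fin d →₀ ℕ) (1 : K) = _
  rw [monomial_mul, one_mul, add_tsub_cancel_of_le hm'le]

lemma prod_le_trace
    (hn : ∀ i, 0 < n i) (hξ : ∀ i, IsPrimitiveRoot (ξ i) (n i)) :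
    prodIdeal (Ggen σ) (semiInvariantsOn σ fun i => ξ i ^ (∑ j', t i j'))
        (semiInvariantsOn σ fun i => (ξ i ^ (∑ j', t i j'))⁻¹)
      ≤ traceIdeal (invariants (Ggen σ))
        (semiInvariantsOn σ fun i => (ξ i ^ (∑ j', t i j'))⁻¹) := by
  rw [prodIdeal, Ideal.span_le]
  rintro p ⟨q, hq, h, hh, heq⟩
  set φ : (semiInvariantsOn σ fun i => (ξ i ^ (∑ j', t i j'))⁻¹) →ₗ[invariants (Ggen σ)]
      invariants (Ggen σ) :=
    { toFun := fun x => ⟨q * (x : MvPolynomial (Fin d) K),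
        mul_PN_invariant n ξ t σ hn hξ hq x.2⟩
      map_add' := by
        intro x y
        apply Subtype.ext
        show q * ((x + y : _) : MvPolynomial (Fin d) K) = q * x + q * y
        rw [AddMemClass.coe_add, mul_add]
      map_smul' := by
        intro r x
        apply Subtype.ext
        show q * ((r : MvPolynomial (Fin d) K) * (x : MvPolynomial (Fin d) K))
            = (r : MvPolynomial (Fin d) K) * (q * (x : MvPolynomial (Fin d) K))
        ring } with hφ
  have : p ∈ LinearMap.range φ := ⟨⟨h, hh⟩, (Subtype.ext heq.symm : φ ⟨h, hh⟩ = p)⟩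
  exact (le_iSup (fun f => LinearMap.range f) φ) this

end AlgLemmas7
/-- Corollary 4.3: with `n_1, …, n_ℓ` pairwise coprime and `G` without
pseudo-reflections, the following are equivalent:
(1) `R^G` is nearly Gorenstein, i.e. `tr_{R^G}(R^{det⁻¹}) ⊇ m_G`;
(2) `R^{det} · R^{det⁻¹} ⊇ m_G`;
(3) every monomial of positive degree lying in `R^G` is divisible in `R` by some
monomial belonging to `R^{det}`. -/
theorem statement14 [IsAlgClosed K] {ℓ : ℕ} (hd : 2 ≤ d) (hℓ : 1 ≤ ℓ)
    (n : Fin ℓ → ℕ) (hn : ∀ i, 0 < n i) (hchar : ∀ i, (n i : K) ≠ 0)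
    (ξ : Fin ℓ → K) (hξ : ∀ i, IsPrimitiveRoot (ξ i) (n i))
    (t : Fin ℓ → Fin d → ℕ)
    (hgcd : ∀ i, Nat.gcd (Finset.univ.gcd (t i)) (n i) = 1)
    (σ : Fin ℓ → (MvPolynomial (Fin d) K ≃ₐ[K] MvPolynomial (Fin d) K))
    (hσ : ∀ i j, σ i (X j) = ξ i ^ t i j • X j)
    (hcop : ∀ i i', i ≠ i' → Nat.Coprime (n i) (n i'))
    (hpr : ∀ g ∈ Ggen σ, ¬ IsPseudoReflection g) :
    ((mG (Ggen σ) ≤ traceIdeal (invariants (Ggen σ))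
        (semiInvariantsOn σ fun i => (ξ i ^ (∑ j, t i j))⁻¹)) ↔
      (mG (Ggen σ) ≤ prodIdeal (Ggen σ)
        (semiInvariantsOn σ fun i => ξ i ^ (∑ j, t i j))
        (semiInvariantsOn σ fun i => (ξ i ^ (∑ j, t i j))⁻¹))) ∧
    ((mG (Ggen σ) ≤ prodIdeal (Ggen σ)
        (semiInvariantsOn σ fun i => ξ i ^ (∑ j, t i j))
        (semiInvariantsOn σ fun i => (ξ i ^ (∑ j, t i j))⁻¹)) ↔
      (∀ m : Fin d →₀ ℕ, m ≠ 0 →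
        (monomial m (1 : K)) ∈ invariants (Ggen σ) →
        ∃ m' : Fin d →₀ ℕ,
          (monomial m' (1 : K)) ∈ semiInvariantsOn σ (fun i => ξ i ^ (∑ j, t i j)) ∧
          (monomial m' (1 : K) : MvPolynomial (Fin d) K) ∣ monomial m 1)) := by
  constructor
  · constructor
    · intro h1
      apply C3_imp_prod n ξ t σ hn hξ hσ
      intro m hm hmem
      have htr : traceIdeal (invariants (Ggen σ))
          (semiInvariantsOn σ fun i => (ξ i ^ (∑ j, t i j))⁻¹) ≤ divIdl ξ t σ :=
        iSup_le fun f => range_le_divIdl n ξ t σ hn hξ hgcd hσ hcop hpr f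
      exact divIdl_monomial ξ t σ hσ m hmem (htr (h1 (mG_monomial_mem σ m hm hmem)))
    · intro h2
      exact h2.trans (prod_le_trace n ξ t σ hn hξ)
  · constructor
    · intro h2 m hm hmem
      exact divIdl_monomial ξ t σ hσ m hmem
        ((prodIdeal_le_divIdl ξ t σ hσ) (h2 (mG_monomial_mem σ m hm hmem)))
    · exact C3_imp_prod n ξ t σ hn hξ hσ

end
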